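/- The map f sending a composition r_1 + r_2 + ... + r_k of n into ones and twos to the permutation α_1 ⊕ α_2 ⊕ ... ⊕ α_k, where α_i = 1 if r_i = 1 and α_i = 21 if r_i = 2, is a bijection from the set of compositions of n of ones and twos onto Av_n(P_3). -/

import Mathlib

/-- `π` avoids the POP `P_3` (poset on `{1,2,3}` with `1 > 3`). -/
def AvoidsP3 {n : ℕ} (π : Equiv.Perm (Fin n)) : Prop :=
  ¬ ∃ i j k : Fin n, i < j ∧ j < k ∧ π k < π i

/-- The permutation of length `a` assigned to a part `a` of a composition:
the identity, except that a part `2` is sent to the transposition `21`. -/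
def partPerm (a : ℕ) : Equiv.Perm (Fin a) :=
  if h : a = 2 then (finCongr h.symm).permCongr (Equiv.swap 0 1) else Equiv.refl _

/-- The direct sum `α_1 ⊕ α_2 ⊕ ⋯ ⊕ α_k` associated to a composition
`(r_1, …, r_k)`, where `α_i = 1` if `r_i = 1` and `α_i = 21` if `r_i = 2`. -/
def blockPerm : (l : List ℕ) → Equiv.Perm (Fin l.sum)
  | [] => Equiv.refl _
  | a :: l =>
      (finCongr (by simp)).permCongr
        (finSumFinEquiv.symm.trans
          ((Equiv.sumCongr (partPerm a) (blockPerm l)).trans finSumFinEquiv))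

/-- The map `f` from compositions of `n` of ones and twos to permutations of `[n]`. -/
def compToPerm (n : ℕ)
    (l : {l : List ℕ // (∀ x ∈ l, x = 1 ∨ x = 2) ∧ l.sum = n}) : Equiv.Perm (Fin n) :=
  (finCongr l.2.2).permCongr (blockPerm l.1)

def fval : List ℕ → ℕ → ℕ
  | [], p => p
  | a :: l, p => if p < a then (if a = 2 then 1 - p else p) else a + fval l (p - a)

lemma partPerm_val (a : ℕ) (p : Fin a) :
    ((partPerm a p : Fin a) : ℕ) = if a = 2 then 1 - (p : ℕ) else (p : ℕ) := by
  unfold partPerm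
  split
  · rename_i h
    subst h
    fin_cases p <;> decide
  · rename_i h
    simp [h]

lemma blockAux {a m N : ℕ} (e : a + m = N) (σ : Equiv.Perm (Fin a))
    (τ : Equiv.Perm (Fin m)) (p : Fin N) :
    (((finCongr e).permCongr
      (finSumFinEquiv.symm.trans
        ((Equiv.sumCongr σ τ).trans finSumFinEquiv))) p : ℕ) =
    if h : (p : ℕ) < a then (σ ⟨p, h⟩ : ℕ)
    else a + (τ ⟨(p : ℕ) - a, by subst e; have := p.isLt; omega⟩ : ℕ) := by
  subst e
  simp only [Equiv.permCongr_apply, finCongr_symm, finCongr_apply, Equiv.trans_apply]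
  by_cases h : (p : ℕ) < a
  · have h1 : finSumFinEquiv.symm (Fin.cast rfl p) = Sum.inl ⟨(p : ℕ), h⟩ := by
      rw [Equiv.symm_apply_eq]
      apply Fin.ext
      simp
    rw [h1, dif_pos h]
    simp
  · push_neg at h
    have hlt : (p : ℕ) - a < m := by have := p.isLt; omega
    have h1 : finSumFinEquiv.symm (Fin.cast rfl p) = Sum.inr ⟨(p : ℕ) - a, hlt⟩ := by
      rw [Equiv.symm_apply_eq]
      apply Fin.ext
      simp
      omega
    rw [h1, dif_neg (by omega)]
    simp

lemma blockPerm_val : ∀ (l : List ℕ) (p : Fin l.sum),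
    ((blockPerm l p : Fin l.sum) : ℕ) = fval l (p : ℕ)
  | [], p => by simp [blockPerm, fval]; rfl
  | a :: l, p => by
    rw [blockPerm]
    refine (blockAux _ _ _ p).trans ?_
    by_cases h : (p : ℕ) < a
    · rw [dif_pos h, fval, if_pos h, partPerm_val]
    · rw [dif_neg h, fval, if_neg h, blockPerm_val l]

lemma compToPerm_val (n : ℕ) (l : {l : List ℕ // (∀ x ∈ l, x = 1 ∨ x = 2) ∧ l.sum = n})
    (p : Fin n) : ((compToPerm n l p : Fin n) : ℕ) = fval l.1 (p : ℕ) := by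
  unfold compToPerm
  simp only [Equiv.permCongr_apply, finCongr_symm, finCongr_apply]
  rw [show ((Fin.cast (l.2.2) (blockPerm l.1 (Fin.cast l.2.2.symm p)) : Fin n) : ℕ)
      = ((blockPerm l.1 (Fin.cast l.2.2.symm p) : Fin l.1.sum) : ℕ) from rfl,
    blockPerm_val]
  rfl

lemma fval_bounds (l : List ℕ) (hl : ∀ x ∈ l, x = 1 ∨ x = 2) (p : ℕ) :
    fval l p ≤ p + 1 ∧ p ≤ fval l p + 1 := by
  induction l generalizing p with
  | nil => simp [fval]
  | cons a l ih =>
    have ha := hl a (by simp)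
    rw [fval]
    by_cases h : p < a
    · rcases ha with h1 | h2 <;> subst_vars <;> simp_all <;> omega
    · rw [if_neg h]
      have := ih (fun x hx => hl x (by simp [hx])) (p - a)
      omega

lemma fval_inj : ∀ (l l' : List ℕ), (∀ x ∈ l, x = 1 ∨ x = 2) → (∀ x ∈ l', x = 1 ∨ x = 2) →
    l.sum = l'.sum → (∀ p < l.sum, fval l p = fval l' p) → l = l'
  | [], [], _, _, _, _ => rfl
  | [], b :: l', h, h', hs, _ => by
    exfalso
    have := h' b (by simp)
    simp at hs
    omega
  | a :: l, [], h, h', hs, _ => by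
    exfalso
    have := h a (by simp)
    simp at hs
    omega
  | a :: l, b :: l', h, h', hs, hf => by
    have ha := h a (by simp)
    have hb := h' b (by simp)
    have hpos : 0 < (a :: l).sum := by simp; omega
    have h0 := hf 0 hpos
    have hab : a = b := by
      rw [fval, fval] at h0
      rcases ha with h1 | h1 <;> rcases hb with h2 | h2 <;> subst_vars <;> simp at h0 <;> omega
    subst hab
    have : l = l' := by
      apply fval_inj l l' (fun x hx => h x (by simp [hx])) (fun x hx => h' x (by simp [hx]))
      · simp at hs; omega
      · intro p hp
        have hpa : p + a < (a :: l).sum := by simp; omega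
        have := hf (p + a) hpa
        rw [fval, fval, if_neg (by omega), if_neg (by omega)] at this
        simpa using this
    rw [this]

lemma high_of_low {n a : ℕ} (π : Equiv.Perm (Fin n))
    (hlow' : ∀ p : Fin n, (p : ℕ) < a → (π.symm p : ℕ) < a) :
    ∀ p : Fin n, a ≤ (p : ℕ) → a ≤ (π p : ℕ) := by
  intro p hp
  by_contra hc
  push_neg at hc
  have := hlow' (π p) hc
  rw [Equiv.symm_apply_apply] at this
  omega

noncomputable def restrictPerm {n : ℕ} (a : ℕ) (π : Equiv.Perm (Fin n))
    (hlow : ∀ p : Fin n, (p : ℕ) < a → (π p : ℕ) < a)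
    (hlow' : ∀ p : Fin n, (p : ℕ) < a → (π.symm p : ℕ) < a) :
    Equiv.Perm (Fin (n - a)) :=
  Equiv.ofBijective
    (fun i => ⟨(π ⟨a + i, by have := i.isLt; omega⟩ : ℕ) - a, by
      have := (π ⟨a + i, by have := i.isLt; omega⟩).isLt
      have := i.isLt
      omega⟩)
    (by
      rw [Fintype.bijective_iff_injective_and_card]
      refine ⟨?_, rfl⟩
      intro i j hij
      have hhigh := high_of_low π hlow'
      have hi := i.isLt
      have hj := j.isLt
      have h1 : a ≤ (π ⟨a + i, by omega⟩ : ℕ) := hhigh _ (by simp)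
      have h2 : a ≤ (π ⟨a + j, by omega⟩ : ℕ) := hhigh _ (by simp)
      have h0 := congrArg Fin.val hij
      simp only [] at h0
      have h3 : (π ⟨a + i, by omega⟩ : ℕ) = (π ⟨a + j, by omega⟩ : ℕ) := by omega
      have h4 : π ⟨a + i, by omega⟩ = π ⟨a + j, by omega⟩ := Fin.ext h3
      have h5 := π.injective h4
      have h6 := congrArg Fin.val h5
      simp only [] at h6
      exact Fin.ext (by omega))

lemma restrictPerm_val {n : ℕ} (a : ℕ) (π : Equiv.Perm (Fin n))
    (hlow : ∀ p : Fin n, (p : ℕ) < a → (π p : ℕ) < a)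
    (hlow' : ∀ p : Fin n, (p : ℕ) < a → (π.symm p : ℕ) < a) (i : Fin (n - a)) :
    ((restrictPerm a π hlow hlow' i : Fin (n - a)) : ℕ)
      = (π ⟨a + i, by have := i.isLt; omega⟩ : ℕ) - a := rfl

lemma restrictPerm_avoids {n : ℕ} (a : ℕ) (π : Equiv.Perm (Fin n))
    (hlow : ∀ p : Fin n, (p : ℕ) < a → (π p : ℕ) < a)
    (hlow' : ∀ p : Fin n, (p : ℕ) < a → (π.symm p : ℕ) < a)
    (hπ : AvoidsP3 π) : AvoidsP3 (restrictPerm a π hlow hlow') := by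
  rintro ⟨i, j, k, hij, hjk, hlt⟩
  have hhigh := high_of_low π hlow'
  apply hπ
  refine ⟨⟨a + i, by have := i.isLt; omega⟩, ⟨a + j, by have := j.isLt; omega⟩,
    ⟨a + k, by have := k.isLt; omega⟩, ?_, ?_, ?_⟩
  · rw [Fin.mk_lt_mk]; have := Fin.lt_def.mp hij; omega
  · rw [Fin.mk_lt_mk]; have := Fin.lt_def.mp hjk; omega
  · rw [Fin.lt_def]
    have h1 := Fin.lt_def.mp hlt
    rw [restrictPerm_val, restrictPerm_val] at h1
    have hk := hhigh ⟨a + k, by have := k.isLt; omega⟩ (by simp)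
    have hi := hhigh ⟨a + i, by have := i.isLt; omega⟩ (by simp)
    omega

lemma surj : ∀ (n : ℕ) (π : Equiv.Perm (Fin n)), AvoidsP3 π →
    ∃ l : List ℕ, (∀ x ∈ l, x = 1 ∨ x = 2) ∧ l.sum = n ∧
      ∀ p : Fin n, ((π p : Fin n) : ℕ) = fval l (p : ℕ) := by
  intro n
  induction n using Nat.strong_induction_on with
  | _ n IH =>
  intro π hπ
  rcases Nat.eq_zero_or_pos n with h0 | h0
  · subst h0
    exact ⟨[], by simp, rfl, fun p => p.elim0⟩
  have hA : ∀ i j k : Fin n, i < j → j < k → π i ≤ π k := by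
    intro i j k hij hjk
    by_contra hc
    push_neg at hc
    exact hπ ⟨i, j, k, hij, hjk, hc⟩
  have hπ0 : (π ⟨0, h0⟩ : ℕ) ≤ 1 := by
    by_contra hc
    push_neg at hc
    have hn2 : 2 < n := lt_of_le_of_lt hc (π ⟨0, h0⟩).isLt
    set k0 := π.symm ⟨0, h0⟩ with hk0
    set k1 := π.symm ⟨1, by omega⟩ with hk1
    have e0 : π k0 = ⟨0, h0⟩ := π.apply_symm_apply _
    have e1 : π k1 = ⟨1, by omega⟩ := π.apply_symm_apply _
    have nk0 : (k0 : ℕ) ≠ 0 := by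
      intro h
      rw [show k0 = ⟨0, h0⟩ from Fin.ext h] at e0
      rw [e0] at hc
      simp at hc
    have nk1 : (k1 : ℕ) ≠ 0 := by
      intro h
      rw [show k1 = ⟨0, h0⟩ from Fin.ext h] at e1
      rw [e1] at hc
      simp at hc
    have hne : (k0 : ℕ) ≠ (k1 : ℕ) := by
      intro h
      have : k0 = k1 := Fin.ext h
      rw [this, e1] at e0
      simp at e0
    have hex : ∃ k : Fin n, 2 ≤ (k : ℕ) ∧ (π k : ℕ) ≤ 1 := by
      by_cases h : 2 ≤ (k0 : ℕ)
      · exact ⟨k0, h, by rw [e0]; simp⟩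
      · exact ⟨k1, by omega, by rw [e1]⟩
    obtain ⟨k, hk2, hkv⟩ := hex
    have := hA ⟨0, h0⟩ ⟨1, by omega⟩ k (by rw [Fin.mk_lt_mk]; omega)
      (by rw [Fin.lt_def]; simp; omega)
    rw [Fin.le_def] at this
    omega
  by_cases hz : (π ⟨0, h0⟩ : ℕ) = 0
  · -- first part is 1
    have hlow : ∀ p : Fin n, (p : ℕ) < 1 → (π p : ℕ) < 1 := by
      intro p hp
      rw [show p = ⟨0, h0⟩ from Fin.ext (show (p : ℕ) = 0 by omega)]
      omega
    have hfix : π ⟨0, h0⟩ = ⟨0, h0⟩ := Fin.ext hz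
    have hlow' : ∀ p : Fin n, (p : ℕ) < 1 → (π.symm p : ℕ) < 1 := by
      intro p hp
      rw [show p = ⟨0, h0⟩ from Fin.ext (show (p : ℕ) = 0 by omega), ← hfix, Equiv.symm_apply_apply]
      omega
    have hhigh := high_of_low π hlow'
    obtain ⟨l', hl'1, hl'2, hl'3⟩ := IH (n - 1) (by omega) (restrictPerm 1 π hlow hlow')
      (restrictPerm_avoids 1 π hlow hlow' hπ)
    refine ⟨1 :: l', ?_, by simp [hl'2]; omega, ?_⟩
    · intro x hx
      rcases List.mem_cons.mp hx with h | h
      · left; exact h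
      · exact hl'1 x h
    intro p
    by_cases hp : (p : ℕ) < 1
    · rw [show p = ⟨0, h0⟩ from Fin.ext (show (p : ℕ) = 0 by omega)]
      rw [fval, if_pos (by omega)]
      simpa using hz
    · have h1 := hl'3 ⟨(p : ℕ) - 1, by have := p.isLt; omega⟩
      rw [restrictPerm_val] at h1
      simp only at h1
      rw [show (⟨1 + ((p : ℕ) - 1), by have := p.isLt; omega⟩ : Fin n) = p from
        Fin.ext (by simp; omega)] at h1
      rw [fval, if_neg hp]
      have := hhigh p (by omega)
      omega
  · -- first part is 2
    have hv1 : (π ⟨0, h0⟩ : ℕ) = 1 := by omega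
    have hn2 : 1 < n := lt_of_le_of_lt (by omega) (π ⟨0, h0⟩).isLt
    have hπ1 : π ⟨1, hn2⟩ = ⟨0, h0⟩ := by
      set k := π.symm ⟨0, h0⟩ with hk
      have e0 : π k = ⟨0, h0⟩ := π.apply_symm_apply _
      have nk0 : (k : ℕ) ≠ 0 := by
        intro h
        rw [show k = ⟨0, h0⟩ from Fin.ext h] at e0
        rw [e0] at hv1
        simp at hv1
      have hk1 : (k : ℕ) = 1 := by
        by_contra hc
        have hk2 : 2 ≤ (k : ℕ) := by omega
        have := hA ⟨0, h0⟩ ⟨1, hn2⟩ k (by rw [Fin.mk_lt_mk]; omega)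
          (by rw [Fin.lt_def]; simp; omega)
        rw [Fin.le_def, e0] at this
        simp at this
        omega
      rw [show (⟨1, hn2⟩ : Fin n) = k from Fin.ext hk1.symm]
      exact e0
    have hfix0 : π ⟨0, h0⟩ = ⟨1, hn2⟩ := Fin.ext hv1
    have hlow : ∀ p : Fin n, (p : ℕ) < 2 → (π p : ℕ) < 2 := by
      intro p hp
      rcases (show (p : ℕ) = 0 ∨ (p : ℕ) = 1 by omega) with h | h
      · rw [show p = ⟨0, h0⟩ from Fin.ext (show (p : ℕ) = 0 from h)]; omega
      · rw [show p = ⟨1, hn2⟩ from Fin.ext (show (p : ℕ) = 1 from h), hπ1]; simp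
    have hlow' : ∀ p : Fin n, (p : ℕ) < 2 → (π.symm p : ℕ) < 2 := by
      intro p hp
      rcases (show (p : ℕ) = 0 ∨ (p : ℕ) = 1 by omega) with h | h
      · rw [show p = ⟨0, h0⟩ from Fin.ext (show (p : ℕ) = 0 from h), ← hπ1, Equiv.symm_apply_apply]; simp
      · rw [show p = ⟨1, hn2⟩ from Fin.ext (show (p : ℕ) = 1 from h), ← hfix0, Equiv.symm_apply_apply]; simp
    have hhigh := high_of_low π hlow'
    obtain ⟨l', hl'1, hl'2, hl'3⟩ := IH (n - 2) (by omega) (restrictPerm 2 π hlow hlow')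
      (restrictPerm_avoids 2 π hlow hlow' hπ)
    refine ⟨2 :: l', ?_, by simp [hl'2]; omega, ?_⟩
    · intro x hx
      rcases List.mem_cons.mp hx with h | h
      · right; exact h
      · exact hl'1 x h
    intro p
    by_cases hp : (p : ℕ) < 2
    · rw [fval, if_pos hp, if_pos rfl]
      rcases (show (p : ℕ) = 0 ∨ (p : ℕ) = 1 by omega) with h | h
      · rw [show p = ⟨0, h0⟩ from Fin.ext (show (p : ℕ) = 0 from h)]
        simp [hv1, h]
      · rw [show p = ⟨1, hn2⟩ from Fin.ext (show (p : ℕ) = 1 from h), hπ1]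
        simp [h]
    · have h1 := hl'3 ⟨(p : ℕ) - 2, by have := p.isLt; omega⟩
      rw [restrictPerm_val] at h1
      simp only at h1
      rw [show (⟨2 + ((p : ℕ) - 2), by have := p.isLt; omega⟩ : Fin n) = p from
        Fin.ext (by simp; omega)] at h1
      rw [fval, if_neg hp]
      have := hhigh p (by omega)
      omega

theorem stmt_10 (n : ℕ) :
    Function.Injective (compToPerm n) ∧
    Set.range (compToPerm n) = {π : Equiv.Perm (Fin n) | AvoidsP3 π} := by
  constructor
  · intro l l' hE
    apply Subtype.ext
    apply fval_inj l.1 l'.1 l.2.1 l'.2.1 (l.2.2.trans l'.2.2.symm)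
    intro p hp
    have hpn : p < n := l.2.2 ▸ hp
    have := congrArg (fun σ : Equiv.Perm (Fin n) => ((σ ⟨p, hpn⟩ : Fin n) : ℕ)) hE
    rw [compToPerm_val, compToPerm_val] at this
    exact this
  · ext π
    simp only [Set.mem_range, Set.mem_setOf_eq]
    constructor
    · rintro ⟨l, rfl⟩ ⟨i, j, k, hij, hjk, hlt⟩
      have hi := compToPerm_val n l i
      have hk := compToPerm_val n l k
      have b1 := fval_bounds l.1 l.2.1 i
      have b2 := fval_bounds l.1 l.2.1 k
      rw [Fin.lt_def] at hij hjk hlt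
      rw [hi, hk] at hlt
      omega
    · intro h
      obtain ⟨l, h1, h2, h3⟩ := surj n π h
      refine ⟨⟨l, h1, h2⟩, ?_⟩
      apply Equiv.ext
      intro p
      apply Fin.ext
      rw [compToPerm_val]
      exact (h3 p).symm
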